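/- Let G be a metric graph embedded in ℝⁿ with straight-line edges, finitely many vertices and edges, and shortest edge length l > 0. Then the geodesic feature size τ_G of G satisfies 0 < τ_G ≤ l/2. -/
import Mathlib


noncomputable section
open scoped ENNReal
open Metric Set

abbrev E (n : ℕ) := EuclideanSpace ℝ (Fin n)

/-- The geometric realization of a straight-line graph: the union of its
edge segments. -/
def graphSet {n : ℕ} (Ed : Finset (E n × E n)) : Set (E n) :=
  ⋃ e ∈ Ed, segment ℝ e.1 e.2

/-- The graph with vertex set `V` and straight-line edges `Ed` is embedded:
edges are nondegenerate segments between vertices, two distinct edges meet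
only in common endpoints, and no vertex lies in the interior of an edge. -/
def IsEmbeddedGraph {n : ℕ} (V : Finset (E n)) (Ed : Finset (E n × E n)) : Prop :=
  (∀ e ∈ Ed, e.1 ∈ V ∧ e.2 ∈ V ∧ e.1 ≠ e.2) ∧
  (∀ e ∈ Ed, ∀ e' ∈ Ed, e ≠ e' →
      segment ℝ e.1 e.2 ∩ segment ℝ e'.1 e'.2 ⊆ ({e.1, e.2} : Set (E n)) ∩ {e'.1, e'.2}) ∧
  (∀ v ∈ V, ∀ e ∈ Ed, v ∈ segment ℝ e.1 e.2 → v = e.1 ∨ v = e.2)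

/-- The intrinsic (geodesic) distance in a set `G`: the infimum of lengths
(total variations) of continuous paths in `G` from `x` to `y`. -/
def dG {n : ℕ} (G : Set (E n)) (x y : E n) : ℝ≥0∞ :=
  ⨅ (γ : ℝ → E n) (_ : ContinuousOn γ (Set.Icc 0 1))
    (_ : Set.MapsTo γ (Set.Icc 0 1) G) (_ : γ 0 = x) (_ : γ 1 = y),
    eVariationOn γ (Set.Icc 0 1)

/-- `l` is the length of the shortest edge of `Ed`. -/
def IsMinEdgeLength {n : ℕ} (Ed : Finset (E n × E n)) (l : ℝ) : Prop :=
  (∀ e ∈ Ed, l ≤ dist e.1 e.2) ∧ ∃ e ∈ Ed, dist e.1 e.2 = l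

/-- The geodesic feature size of `G` (with shortest edge length `l`): the
supremum of all `r > 0` such that `‖x - y‖ < 2r` implies `d_G(x,y) < l`. -/
def gfs {n : ℕ} (G : Set (E n)) (l : ℝ) : ℝ :=
  sSup {r : ℝ | 0 < r ∧ ∀ x ∈ G, ∀ y ∈ G,
    dist x y < 2 * r → dG G x y < ENNReal.ofReal l}

lemma isCompact_seg {n : ℕ} (x y : E n) : IsCompact (segment ℝ x y) := by
  rw [segment_eq_image_lineMap]
  exact isCompact_Icc.image AffineMap.lineMap_continuous

lemma eVar_lineMap {n : ℕ} (x v : E n) :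
    eVariationOn (fun t : ℝ => AffineMap.lineMap x v t) (Icc (0:ℝ) 1)
      ≤ ENNReal.ofReal (dist x v) := by
  have hid : eVariationOn (id : ℝ → ℝ) (Icc (0:ℝ) 1) ≤ ENNReal.ofReal 1 := by
    have h := (monotoneOn_id (s := Icc (0:ℝ) 1)).eVariationOn_le
      (a := 0) (b := 1) (by simp) (by simp)
    simpa using h
  have hlip : LipschitzOnWith (nndist x v) (fun t : ℝ => AffineMap.lineMap x v t) univ :=
    (lipschitzWith_lineMap x v).lipschitzOnWith
  have h2 := hlip.comp_eVariationOn_le (g := (id : ℝ → ℝ)) (s := Icc (0:ℝ) 1)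
    (mapsTo_univ _ _)
  calc eVariationOn (fun t : ℝ => AffineMap.lineMap x v t) (Icc (0:ℝ) 1)
      ≤ (nndist x v : ℝ≥0∞) * eVariationOn (id : ℝ → ℝ) (Icc (0:ℝ) 1) := h2
    _ ≤ (nndist x v : ℝ≥0∞) * ENNReal.ofReal 1 := by gcongr
    _ = ENNReal.ofReal (dist x v) := by
        rw [ENNReal.ofReal_one, mul_one, ← edist_nndist, edist_dist]

lemma edist_le_dG {n : ℕ} (G : Set (E n)) (x y : E n) :
    edist x y ≤ dG G x y := by
  refine le_iInf fun γ => le_iInf fun _ => le_iInf fun _ => le_iInf fun h0 =>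
    le_iInf fun h1 => ?_
  rw [← h0, ← h1]
  exact eVariationOn.edist_le γ (by simp : (0:ℝ) ∈ Icc (0:ℝ) 1) (by simp)

lemma dG_le_via {n : ℕ} {G : Set (E n)} {x v y : E n}
    (h1 : segment ℝ x v ⊆ G) (h2 : segment ℝ v y ⊆ G) :
    dG G x y ≤ ENNReal.ofReal (dist x v + dist v y) := by
  classical
  set γ : ℝ → E n := fun t =>
    if t ≤ 1/2 then AffineMap.lineMap x v (2*t) else AffineMap.lineMap v y (2*t - 1) with hγ
  have hc : Continuous γ := by
    apply Continuous.if_le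
    · exact AffineMap.lineMap_continuous.comp (by continuity)
    · exact AffineMap.lineMap_continuous.comp (by continuity)
    · exact continuous_id
    · exact continuous_const
    · intro t ht
      rw [ht]
      norm_num
  have hmem1 : ∀ t : ℝ, t ∈ Icc (0:ℝ) 1 → AffineMap.lineMap x v t ∈ segment ℝ x v := by
    intro t ht
    rw [segment_eq_image_lineMap]
    exact mem_image_of_mem _ ht
  have hmem2 : ∀ t : ℝ, t ∈ Icc (0:ℝ) 1 → AffineMap.lineMap v y t ∈ segment ℝ v y := by
    intro t ht
    rw [segment_eq_image_lineMap]
    exact mem_image_of_mem _ ht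
  have hmaps : MapsTo γ (Icc (0:ℝ) 1) G := by
    intro t ht
    simp only [hγ]
    by_cases h : t ≤ 1/2
    · rw [if_pos h]
      exact h1 (hmem1 _ ⟨by linarith [ht.1], by linarith⟩)
    · rw [if_neg h]
      push_neg at h
      exact h2 (hmem2 _ ⟨by linarith, by linarith [ht.2]⟩)
  have h0 : γ 0 = x := by simp [hγ]
  have hone : γ 1 = y := by norm_num [hγ]
  have hvar : eVariationOn γ (Icc (0:ℝ) 1) ≤ ENNReal.ofReal (dist x v + dist v y) := by
    have hsplit := eVariationOn.Icc_add_Icc γ (s := Icc (0:ℝ) 1)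
      (a := 0) (b := 1/2) (c := 1) (by norm_num) (by norm_num) (by norm_num)
    rw [show Icc (0:ℝ) 1 ∩ Icc 0 (1/2) = Icc (0:ℝ) (1/2) by
          rw [inter_eq_right.2 (Icc_subset_Icc le_rfl (by norm_num))],
        show Icc (0:ℝ) 1 ∩ Icc (1/2) 1 = Icc (1/2:ℝ) 1 by
          rw [inter_eq_right.2 (Icc_subset_Icc (by norm_num) le_rfl)],
        inter_self] at hsplit
    rw [← hsplit]
    have hb1 : eVariationOn γ (Icc (0:ℝ) (1/2)) ≤ ENNReal.ofReal (dist x v) := by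
      have heq : EqOn γ ((fun t : ℝ => AffineMap.lineMap x v t) ∘ (fun t : ℝ => 2*t))
          (Icc (0:ℝ) (1/2)) := by
        intro t ht
        simp only [hγ, Function.comp]
        rw [if_pos ht.2]
      rw [eVariationOn.eq_of_eqOn heq]
      refine le_trans (eVariationOn.comp_le_of_monotoneOn _ _
        (fun a _ b _ hab => by linarith) ?_) (eVar_lineMap x v)
      intro t ht
      obtain ⟨ha, hb⟩ := ht
      simp only [mem_Icc]
      constructor <;> linarith
    have hb2 : eVariationOn γ (Icc (1/2:ℝ) 1) ≤ ENNReal.ofReal (dist v y) := by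
      have heq : EqOn γ ((fun t : ℝ => AffineMap.lineMap v y t) ∘ (fun t : ℝ => 2*t - 1))
          (Icc (1/2:ℝ) 1) := by
        intro t ht
        simp only [hγ, Function.comp]
        by_cases h : t ≤ 1/2
        · have ht2 : t = 1/2 := le_antisymm h ht.1
          rw [if_pos h, ht2]
          norm_num
        · rw [if_neg h]
      rw [eVariationOn.eq_of_eqOn heq]
      refine le_trans (eVariationOn.comp_le_of_monotoneOn _ _
        (fun a _ b _ hab => by linarith) ?_) (eVar_lineMap v y)
      intro t ht
      obtain ⟨ha, hb⟩ := ht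
      simp only [mem_Icc]
      constructor <;> linarith
    calc eVariationOn γ (Icc (0:ℝ) (1/2)) + eVariationOn γ (Icc (1/2:ℝ) 1)
        ≤ ENNReal.ofReal (dist x v) + ENNReal.ofReal (dist v y) := add_le_add hb1 hb2
      _ = ENNReal.ofReal (dist x v + dist v y) :=
          (ENNReal.ofReal_add dist_nonneg dist_nonneg).symm
  exact le_trans (iInf_le_of_le γ <| iInf_le_of_le hc.continuousOn <|
    iInf_le_of_le hmaps <| iInf_le_of_le h0 <| iInf_le_of_le hone le_rfl) hvar

lemma pair_r {n : ℕ} (a b c d : E n) {l : ℝ} (hl0 : 0 < l) :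
    ∃ r : ℝ, 0 < r ∧ ∀ x ∈ segment ℝ a b, ∀ y ∈ segment ℝ c d, dist x y < 2 * r →
      ∃ v, v ∈ segment ℝ a b ∧ v ∈ segment ℝ c d ∧ dist x v + dist v y < l := by
  set s1 := segment ℝ a b
  set s2 := segment ℝ c d
  set A : Set (E n × E n) := {p | p.1 ∈ s1 ∧ p.2 ∈ s2 ∧
    ∀ v, v ∈ s1 → v ∈ s2 → l ≤ dist p.1 v + dist v p.2} with hA
  have hAclosed : IsClosed A := by
    have : A = (s1 ×ˢ s2) ∩ ⋂ (v : E n) (_ : v ∈ s1) (_ : v ∈ s2),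
        {p : E n × E n | l ≤ dist p.1 v + dist v p.2} := by
      ext p
      simp only [hA, mem_setOf_eq, mem_inter_iff, mem_prod, mem_iInter]
      tauto
    rw [this]
    refine IsClosed.inter (IsClosed.prod (isCompact_seg a b).isClosed
      (isCompact_seg c d).isClosed) ?_
    refine isClosed_iInter fun v => isClosed_iInter fun _ => isClosed_iInter fun _ => ?_
    exact isClosed_le continuous_const
      ((continuous_fst.dist continuous_const).add (continuous_const.dist continuous_snd))
  have hsub : A ⊆ s1 ×ˢ s2 := fun p hp => ⟨hp.1, hp.2.1⟩
  have hAcomp : IsCompact A :=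
    ((isCompact_seg a b).prod (isCompact_seg c d)).of_isClosed_subset hAclosed hsub
  rcases A.eq_empty_or_nonempty with hAe | hAne
  · refine ⟨1, one_pos, fun x hx y hy _ => ?_⟩
    have : (x, y) ∉ A := by rw [hAe]; exact notMem_empty _
    simp only [hA, mem_setOf_eq, not_and, not_forall] at this
    obtain ⟨v, hv1, hv2, hv3⟩ := this hx hy
    exact ⟨v, hv1, hv2, lt_of_not_ge hv3⟩
  · obtain ⟨p₀, hp₀A, hp₀min⟩ := hAcomp.exists_isMinOn hAne
      (continuous_dist.comp (continuous_fst.prodMk continuous_snd)).continuousOn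
    set δ := dist p₀.1 p₀.2 with hδ
    have hδpos : 0 < δ := by
      rcases lt_or_eq_of_le (dist_nonneg (x := p₀.1) (y := p₀.2)) with h | h
      · exact h
      · exfalso
        have heq : p₀.1 = p₀.2 := by
          rw [← dist_eq_zero]; exact h.symm
        have := hp₀A.2.2 p₀.1 hp₀A.1 (heq ▸ hp₀A.2.1)
        rw [dist_self, ← heq, dist_self] at this
        linarith
    refine ⟨δ / 2, by linarith, fun x hx y hy hxy => ?_⟩
    have : (x, y) ∉ A := by
      intro hmem
      have := hp₀min hmem
      simp only [Function.comp] at this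
      have : δ ≤ dist x y := this
      linarith
    simp only [hA, mem_setOf_eq, not_and, not_forall] at this
    obtain ⟨v, hv1, hv2, hv3⟩ := this hx hy
    exact ⟨v, hv1, hv2, lt_of_not_ge hv3⟩

/-- for an embedded metric graph with straight-line edges and
shortest edge length `l > 0`, the geodesic feature size satisfies
`0 < τ_G ≤ l/2`. -/
theorem stmt4 {n : ℕ} (V : Finset (E n)) (Ed : Finset (E n × E n))
    (hEd : Ed.Nonempty) (hemb : IsEmbeddedGraph V Ed)
    (l : ℝ) (hl : IsMinEdgeLength Ed l) (hl0 : 0 < l) :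
    0 < gfs (graphSet Ed) l ∧ gfs (graphSet Ed) l ≤ l / 2 := by
  classical
  set G := graphSet Ed with hG
  set S := {r : ℝ | 0 < r ∧ ∀ x ∈ G, ∀ y ∈ G,
    dist x y < 2 * r → dG G x y < ENNReal.ofReal l} with hS
  have hmemG : ∀ e ∈ Ed, ∀ z ∈ segment ℝ e.1 e.2, z ∈ G := by
    intro e he z hz
    exact Set.mem_biUnion he hz
  -- upper bound: every element of S is at most l/2
  have hub : ∀ r ∈ S, r ≤ l / 2 := by
    rintro r ⟨hr0, hrp⟩
    by_contra h
    push_neg at h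
    obtain ⟨e₀, he₀Ed, he₀len⟩ := hl.2
    have hx := hmemG e₀ he₀Ed e₀.1 (left_mem_segment ℝ _ _)
    have hy := hmemG e₀ he₀Ed e₀.2 (right_mem_segment ℝ _ _)
    have hd : dist e₀.1 e₀.2 < 2 * r := by rw [he₀len]; linarith
    have hlt := hrp e₀.1 hx e₀.2 hy hd
    have hge := edist_le_dG G e₀.1 e₀.2
    rw [edist_dist, he₀len] at hge
    exact absurd (hge.trans_lt hlt) (lt_irrefl _)
  -- positivity: construct an explicit positive element of S
  have hpair : ∀ p : (E n × E n) × (E n × E n), ∃ r : ℝ, 0 < r ∧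
      ∀ x ∈ segment ℝ p.1.1 p.1.2, ∀ y ∈ segment ℝ p.2.1 p.2.2, dist x y < 2 * r →
        ∃ v, v ∈ segment ℝ p.1.1 p.1.2 ∧ v ∈ segment ℝ p.2.1 p.2.2 ∧
          dist x v + dist v y < l :=
    fun p => pair_r p.1.1 p.1.2 p.2.1 p.2.2 hl0
  choose f hf0 hfp using hpair
  have hPne : (Ed ×ˢ Ed).Nonempty := hEd.product hEd
  set r := (Ed ×ˢ Ed).inf' hPne f with hr
  have hr0 : 0 < r := (Finset.lt_inf'_iff _).2 fun p _ => hf0 p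
  have hrS : r ∈ S := by
    refine ⟨hr0, ?_⟩
    intro x hx y hy hxy
    rw [hG] at hx hy
    simp only [graphSet, mem_iUnion] at hx hy
    obtain ⟨e, he, hxe⟩ := hx
    obtain ⟨e', he', hye⟩ := hy
    have hrle : r ≤ f (e, e') := Finset.inf'_le f (Finset.mem_product.2 ⟨he, he'⟩)
    obtain ⟨v, hv1, hv2, hv3⟩ := hfp (e, e') x hxe y hye (by linarith)
    have hseg1 : segment ℝ x v ⊆ G :=
      subset_trans ((convex_segment e.1 e.2).segment_subset hxe hv1)
        (fun z hz => hmemG e he z hz)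
    have hseg2 : segment ℝ v y ⊆ G :=
      subset_trans ((convex_segment e'.1 e'.2).segment_subset hv2 hye)
        (fun z hz => hmemG e' he' z hz)
    calc dG G x y ≤ ENNReal.ofReal (dist x v + dist v y) := dG_le_via hseg1 hseg2
      _ < ENNReal.ofReal l := (ENNReal.ofReal_lt_ofReal_iff hl0).2 hv3
  have hbdd : BddAbove S := ⟨l / 2, hub⟩
  constructor
  · exact lt_of_lt_of_le hr0 (le_csSup hbdd hrS)
  · exact csSup_le ⟨r, hrS⟩ hub
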